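/- Let K be a field, let α and β be finite types with decidable equality, and let A = Matrix.fromBlocks P Q R S : Matrix (α ⊕ β) (α ⊕ β) K be invertible (IsUnit A.det). Then P is invertible (IsUnit P.det) if and only if the lower-right block (A⁻¹).toBlocks₂₂ of the inverse is invertible. (A principal submatrix of an invertible matrix on a set X of indices is invertible if and only if the principal submatrix of the inverse on the complement of X is invertible.) -/

import Mathlib

open Matrix

/-- a principal block of an invertible matrix is invertible iff the
complementary principal block of the inverse is invertible. -/
theorem stmt_16 {K : Type*} [Field K] {α β : Type*} [Fintype α] [DecidableEq α]
    [Fintype β] [DecidableEq β]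
    (P : Matrix α α K) (Q : Matrix α β K) (R : Matrix β α K) (S : Matrix β β K)
    (hA : IsUnit (Matrix.fromBlocks P Q R S).det) :
    IsUnit P.det ↔ IsUnit ((Matrix.fromBlocks P Q R S)⁻¹.toBlocks₂₂).det := by
  set A := Matrix.fromBlocks P Q R S with hAdef
  have hinv : A * A⁻¹ = 1 := A.mul_nonsing_inv hA
  set B11 := A⁻¹.toBlocks₁₁ with h11d
  set B12 := A⁻¹.toBlocks₁₂ with h12d
  set B21 := A⁻¹.toBlocks₂₁ with h21d
  set B22 := A⁻¹.toBlocks₂₂ with h22d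
  have hB : A⁻¹ = Matrix.fromBlocks B11 B12 B21 B22 := (Matrix.fromBlocks_toBlocks _).symm
  rw [hAdef, hB, Matrix.fromBlocks_multiply] at hinv
  have h12 : P * B12 + Q * B22 = 0 := by
    have := congrArg Matrix.toBlocks₁₂ hinv
    simp [Matrix.toBlocks₁₂, Matrix.one_apply] at this
    ext i j
    simpa [Matrix.one_apply] using congrFun (congrFun this i) j
  have h22 : R * B12 + S * B22 = 1 := by
    have := congrArg Matrix.toBlocks₂₂ hinv
    simp [Matrix.toBlocks₂₂, Matrix.one_apply] at this
    ext i j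
    simpa [Matrix.one_apply] using congrFun (congrFun this i) j
  have key : A * Matrix.fromBlocks 1 B12 0 B22 = Matrix.fromBlocks P 0 R 1 := by
    rw [hAdef, Matrix.fromBlocks_multiply]
    simp [h12, h22]
  have hdet : A.det * B22.det = P.det := by
    have := congrArg Matrix.det key
    rw [Matrix.det_mul, Matrix.det_fromBlocks_zero₂₁, Matrix.det_fromBlocks_zero₁₂] at this
    simpa using this
  constructor
  · intro hP
    exact isUnit_of_mul_isUnit_right (hdet ▸ hP)
  · intro hB22
    exact hdet ▸ hA.mul hB22
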